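/- The randomized voting caterpillar rule on n players is not 2-SNM-α for any α < 1/2 − (n−2)/(n(n−1)). -/

import Mathlib

abbrev Tournament (n : ℕ) := Fin n → Fin n → Bool

def IsTournament {n : ℕ} (T : Tournament n) : Prop :=
  (∀ i, T i i = false) ∧ ∀ i j : Fin n, i ≠ j → T i j = !T j i

def CondorcetWinner {n : ℕ} (T : Tournament n) (i : Fin n) : Prop :=
  ∀ j, j ≠ i → T i j = true

def PairAdjacent {n : ℕ} (i j : Fin n) (T T' : Tournament n) : Prop :=
  ∀ a b : Fin n, ¬((a = i ∧ b = j) ∨ (a = j ∧ b = i)) → T a b = T' a b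

def SAdjacent {n : ℕ} (S : Finset (Fin n)) (T T' : Tournament n) : Prop :=
  ∀ a b : Fin n, (a ∉ S ∨ b ∉ S) → T a b = T' a b

def IsRule {n : ℕ} (r : Tournament n → Fin n → ℝ) : Prop :=
  ∀ T, IsTournament T → (∀ i, 0 ≤ r T i) ∧ (∑ i, r T i) = 1

def CondorcetConsistent {n : ℕ} (r : Tournament n → Fin n → ℝ) : Prop :=
  ∀ T, IsTournament T → ∀ i, CondorcetWinner T i → r T i = 1

def SNM2 {n : ℕ} (r : Tournament n → Fin n → ℝ) (α : ℝ) : Prop :=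
  ∀ T T' : Tournament n, IsTournament T → IsTournament T' →
    ∀ i j : Fin n, i ≠ j → PairAdjacent i j T T' →
      r T' i + r T' j - r T i - r T j ≤ α

def SNMk {n : ℕ} (k : ℕ) (r : Tournament n → Fin n → ℝ) (α : ℝ) : Prop :=
  ∀ S : Finset (Fin n), S.card ≤ k → ∀ T T' : Tournament n,
    IsTournament T → IsTournament T' → SAdjacent S T T' →
      (∑ i ∈ S, r T' i) - (∑ i ∈ S, r T i) ≤ α

def flipTo {n : ℕ} (i j : Fin n) (T : Tournament n) : Tournament n :=
  fun a b => if a = i ∧ b = j then true else if a = j ∧ b = i then false else T a b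

def winCount {n : ℕ} (T : Tournament n) (i : Fin n) : ℕ :=
  (Finset.univ.filter fun j => T i j = true).card

def cyclicT (m w : ℕ) : Tournament m :=
  fun i j => decide (1 ≤ (j.val + m - i.val) % m ∧ (j.val + m - i.val) % m ≤ w)

def skT (n : ℕ) : Tournament n :=
  fun i j =>
    if i.val = n - 1 ∧ j.val = 0 then true
    else if i.val = 0 ∧ j.val = n - 1 then false
    else decide (i.val < j.val)

def catWinner {n : ℕ} (hn : 0 < n) (T : Tournament n) (π : Equiv.Perm (Fin n)) : Fin n :=
  (((List.finRange n).map π).drop 1).foldl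
    (fun w x => if T w x = true then w else x) (π ⟨0, hn⟩)

noncomputable def catRule (n : ℕ) (hn : 0 < n) : Tournament n → Fin n → ℝ :=
  fun T i =>
    ((Finset.univ.filter fun π : Equiv.Perm (Fin n) => catWinner hn T π = i).card : ℝ) /
      (Nat.factorial n)

namespace S11
variable {n : ℕ}

def st (n : ℕ) : Fin n → Fin n → Fin n := fun w x => if skT n w x = true then w else x

lemma st_true {w x : Fin n} (h : skT n w x = true) : st n w x = w := by simp [st, h]
lemma st_false {w x : Fin n} (h : skT n w x = false) : st n w x = x := by simp [st, h]

lemma skT_z_beats (h3 : 3 ≤ n) {z x : Fin n} (hz : z.val = 0) (hx0 : x.val ≠ 0)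
    (hxm : x.val ≠ n-1) : skT n z x = true := by
  simp only [skT, hz]
  have h1 : ¬((0:ℕ) = n - 1 ∧ x.val = 0) := by omega
  have h2 : ¬((0:ℕ) = 0 ∧ x.val = n - 1) := by omega
  have h3' : (0:ℕ) < x.val := by omega
  simp [h1, h2, h3', hx0, hxm]

lemma skT_z_m (h3 : 3 ≤ n) {z m : Fin n} (hz : z.val = 0) (hm : m.val = n-1) :
    skT n z m = false := by
  simp only [skT, hz, hm]
  have h1 : ¬((0:ℕ) = n - 1 ∧ n - 1 = 0) := by omega
  simp [h1]

lemma skT_m_z (h3 : 3 ≤ n) {z m : Fin n} (hz : z.val = 0) (hm : m.val = n-1) :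
    skT n m z = true := by
  simp only [skT, hz, hm]
  simp

lemma skT_m_x (h3 : 3 ≤ n) {m x : Fin n} (hm : m.val = n-1) (hx0 : x.val ≠ 0) :
    skT n m x = false := by
  simp only [skT, hm]
  have h1 : ¬(n - 1 = n - 1 ∧ x.val = 0) := by omega
  have h2 : ¬(n - 1 = 0 ∧ x.val = n - 1) := by omega
  have h3' : ¬(n - 1 < x.val) := by omega
  simp [h1, h2, h3', hx0]

lemma skT_x_z (h3 : 3 ≤ n) {z x : Fin n} (hz : z.val = 0) (hx0 : x.val ≠ 0)
    (hxm : x.val ≠ n-1) : skT n x z = false := by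
  simp only [skT, hz]
  have h1 : ¬(x.val = n - 1 ∧ (0:ℕ) = 0) := by omega
  have h2 : ¬(x.val = 0 ∧ (0:ℕ) = n - 1) := by omega
  have h3' : ¬(x.val < 0) := by omega
  simp [h1, h2, h3', hx0, hxm]

lemma skT_x_m (h3 : 3 ≤ n) {m x : Fin n} (hm : m.val = n-1) (hx0 : x.val ≠ 0)
    (hxm : x.val ≠ n-1) : skT n x m = true := by
  simp only [skT, hm]
  have h1 : ¬(x.val = n - 1 ∧ n - 1 = 0) := by omega
  have h2 : ¬(x.val = 0 ∧ n - 1 = n - 1) := by omega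
  have h3' : x.val < n - 1 := by
    have := x.isLt; omega
  simp [h1, h2, h3', hx0, hxm]

lemma st_self (w : Fin n) : st n w w = w := by simp [st]

lemma F1 (h3 : 3 ≤ n) {z : Fin n} (hz : z.val = 0) :
    ∀ l : List (Fin n), (∀ x ∈ l, x.val ≠ n-1) → List.foldl (st n) z l = l.foldl (st n) z := fun _ _ => rfl

lemma F1' (h3 : 3 ≤ n) {z : Fin n} (hz : z.val = 0) :
    ∀ l : List (Fin n), (∀ x ∈ l, x.val ≠ n-1) → List.foldl (st n) z l = z := by
  intro l
  induction l with
  | nil => intro _; rfl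
  | cons x l ih =>
    intro h
    have hxm : x.val ≠ n-1 := h x (List.mem_cons_self)
    by_cases hx0 : x.val = 0
    · have : x = z := Fin.ext (by omega)
      rw [List.foldl_cons, this, st_self]
      exact ih (fun y hy => h y (List.mem_cons_of_mem _ hy))
    · rw [List.foldl_cons]
      have : st n z x = z := by rw [st]; rw [if_pos (skT_z_beats h3 hz hx0 hxm)]
      rw [this]
      exact ih (fun y hy => h y (List.mem_cons_of_mem _ hy))

lemma F2 (h3 : 3 ≤ n) :
    ∀ (l : List (Fin n)) (w : Fin n), w.val ≠ 0 → w.val ≠ n-1 →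
      (∀ x ∈ l, x.val ≠ 0 ∧ x.val ≠ n-1) →
      (List.foldl (st n) w l).val ≠ 0 ∧ (List.foldl (st n) w l).val ≠ n-1 := by
  intro l
  induction l with
  | nil => intro w h0 hm _; exact ⟨h0, hm⟩
  | cons x l ih =>
    intro w h0 hm h
    rw [List.foldl_cons]
    have hx := h x (List.mem_cons_self)
    have : (st n w x).val ≠ 0 ∧ (st n w x).val ≠ n-1 := by
      rw [st]; split
      · exact ⟨h0, hm⟩
      · exact hx
    exact ih _ this.1 this.2 (fun y hy => h y (List.mem_cons_of_mem _ hy))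

lemma F3 (h3 : 3 ≤ n) {z : Fin n} (hz : z.val = 0) :
    ∀ (l : List (Fin n)) (w : Fin n), w.val ≠ n-1 → (z = w ∨ z ∈ l) →
      (∀ x ∈ l, x.val ≠ n-1) → List.foldl (st n) w l = z := by
  intro l
  induction l with
  | nil =>
    intro w _ hmem _
    rcases hmem with h | h
    · exact h.symm
    · simp at h
  | cons x l ih =>
    intro w hwm hmem h
    have hxm : x.val ≠ n-1 := h x (List.mem_cons_self)
    have hl : ∀ y ∈ l, y.val ≠ n-1 := fun y hy => h y (List.mem_cons_of_mem _ hy)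
    rw [List.foldl_cons]
    by_cases hzw : z = w
    · subst hzw
      by_cases hx0 : x.val = 0
      · have : x = z := Fin.ext (by omega)
        rw [this, st_self]
        exact F1' h3 hz l hl
      · have : st n z x = z := by rw [st, if_pos (skT_z_beats h3 hz hx0 hxm)]
        rw [this]
        exact F1' h3 hz l hl
    · rcases hmem with h' | h'
      · exact absurd h' hzw
      rw [List.mem_cons] at h'
      by_cases hzl : z ∈ l
      · apply ih (st n w x) _ (Or.inr hzl) hl
        rw [st]; split
        · exact hwm
        · exact hxm
      · have hxz : x = z := by
          rcases h' with h' | h'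
          · exact h'.symm
          · exact absurd h' hzl
        subst hxz
        have hw0 : w.val ≠ 0 := fun hc => hzw (Fin.ext (by omega)).symm
        have : st n w x = x := by
          rw [st, if_neg]
          rw [skT_x_z h3 hz hw0 hwm]; simp
        rw [this]
        exact F1' h3 hz l hl

lemma skT_tournament (h3 : 3 ≤ n) : IsTournament (skT n) := by
  constructor
  · intro i
    simp only [skT]
    have h1 : ¬(i.val = n - 1 ∧ i.val = 0) := by omega
    have h2 : ¬(i.val = 0 ∧ i.val = n - 1) := by omega
    have h3' : ¬(i.val < i.val) := by omega
    simp [h1, h2, h3']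
  · intro i j hij
    have hij' : i.val ≠ j.val := fun h => hij (Fin.ext h)
    have hi := i.isLt; have hj := j.isLt
    simp only [skT]
    by_cases c1 : i.val = n - 1 ∧ j.val = 0
    · rw [if_pos c1]
      rw [if_neg (show ¬(j.val = n - 1 ∧ i.val = 0) by omega)]
      rw [if_pos (show j.val = 0 ∧ i.val = n - 1 from ⟨c1.2, c1.1⟩)]
      rfl
    by_cases c2 : i.val = 0 ∧ j.val = n - 1
    · rw [if_neg c1, if_pos c2]
      rw [if_pos (show j.val = n - 1 ∧ i.val = 0 from ⟨c2.2, c2.1⟩)]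
      rfl
    rw [if_neg c1, if_neg c2]
    rw [if_neg (show ¬(j.val = n - 1 ∧ i.val = 0) from fun h => c2 ⟨h.2, h.1⟩)]
    rw [if_neg (show ¬(j.val = 0 ∧ i.val = n - 1) from fun h => c1 ⟨h.2, h.1⟩)]
    by_cases h : i.val < j.val
    · have h' : ¬(j.val < i.val) := by omega
      simp [h, h']
    · have h' : j.val < i.val := by omega
      simp [h, h']

lemma flip_tournament (h3 : 3 ≤ n) {z m : Fin n} (hz : z.val = 0) (hm : m.val = n-1) :
    IsTournament (flipTo z m (skT n)) := by
  have hT := skT_tournament h3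
  have hzm : z ≠ m := by intro h; rw [h] at hz; omega
  constructor
  · intro i
    simp only [flipTo]
    rw [if_neg (show ¬(i = z ∧ i = m) from fun h => hzm (h.1.symm.trans h.2))]
    rw [if_neg (show ¬(i = m ∧ i = z) from fun h => hzm (h.2.symm.trans h.1))]
    exact hT.1 i
  · intro i j hij
    simp only [flipTo]
    by_cases c1 : i = z ∧ j = m
    · rw [if_pos c1]
      rw [if_neg (show ¬(j = z ∧ i = m) from fun h => hzm (h.1 ▸ c1.2))]
      rw [if_pos (show j = m ∧ i = z from ⟨c1.2, c1.1⟩)]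
      rfl
    by_cases c2 : i = m ∧ j = z
    · rw [if_neg c1, if_pos c2]
      rw [if_pos (show j = z ∧ i = m from ⟨c2.2, c2.1⟩)]
      rfl
    rw [if_neg c1, if_neg c2]
    rw [if_neg (show ¬(j = z ∧ i = m) from fun h => c2 ⟨h.2, h.1⟩)]
    rw [if_neg (show ¬(j = m ∧ i = z) from fun h => c1 ⟨h.2, h.1⟩)]
    exact hT.2 i j hij

lemma flip_condorcet (h3 : 3 ≤ n) {z m : Fin n} (hz : z.val = 0) (hm : m.val = n-1) :
    CondorcetWinner (flipTo z m (skT n)) z := by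
  intro j hj
  simp only [flipTo]
  by_cases hjm : j = m
  · rw [if_pos (show True ∧ j = m from ⟨trivial, hjm⟩)]
  · rw [if_neg (show ¬(True ∧ j = m) from fun h => hjm h.2)]
    rw [if_neg (show ¬(z = m ∧ j = z) by
      rintro ⟨h1, -⟩
      have : (0:ℕ) = n - 1 := by rw [← hz, h1, hm]
      omega)]
    have hj0 : j.val ≠ 0 := fun h => hj (Fin.ext (by omega))
    have hjm' : j.val ≠ n - 1 := fun h => hjm (Fin.ext (by omega))
    simp only [skT, hz]
    have h1 : ¬((0:ℕ) = n - 1 ∧ j.val = 0) := by omega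
    have h2 : ¬((0:ℕ) = 0 ∧ j.val = n - 1) := by omega
    have h3' : (0:ℕ) < j.val := by omega
    simp [h1, h2, h3', hj0, hjm']

lemma condorcet_foldl {T : Tournament n} (hT : IsTournament T) {c : Fin n}
    (hc : CondorcetWinner T c) :
    ∀ (l : List (Fin n)) (w : Fin n), (c = w ∨ c ∈ l) →
      List.foldl (fun w x => if T w x = true then w else x) w l = c := by
  intro l
  induction l with
  | nil =>
    rintro w (h | h)
    · exact h.symm
    · simp at h
  | cons x l ih =>
    intro w hmem
    rw [List.foldl_cons]
    by_cases hcl : c ∈ l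
    · exact ih _ (Or.inr hcl)
    rcases hmem with hcw | hcx
    · subst hcw
      by_cases hxc : x = c
      · subst hxc; apply ih; split <;> exact Or.inl rfl
      · rw [if_pos (hc x hxc)]
        exact ih _ (Or.inl rfl)
    · rw [List.mem_cons] at hcx
      rcases hcx with hcx | hcx
      · subst hcx
        by_cases hcw : w = c
        · subst hcw; apply ih; split <;> exact Or.inl rfl
        · rw [if_neg (by
            rw [hT.2 w c hcw, hc w hcw]; simp)]
          exact ih _ (Or.inl rfl)
      · exact absurd hcx hcl

lemma condorcet_catWinner (hn : 0 < n) {T : Tournament n} (hT : IsTournament T)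
    {c : Fin n} (hc : CondorcetWinner T c) (π : Equiv.Perm (Fin n)) :
    catWinner hn T π = c := by
  rw [catWinner]
  apply condorcet_foldl hT hc
  by_cases h : c = π ⟨0, hn⟩
  · exact Or.inl h
  · right
    have hcL : c ∈ (List.finRange n).map π := by
      refine List.mem_map.mpr ⟨π.symm c, List.mem_finRange _, π.apply_symm_apply c⟩
    have hL : ((List.finRange n).map π) =
        π ⟨0, hn⟩ :: ((List.finRange n).map π).drop 1 := by
      have hlen : 0 < ((List.finRange n).map π).length := by simp [hn]
      have := List.drop_eq_getElem_cons hlen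
      simp only [List.drop_zero] at this
      rw [this]
      congr 1
      rw [List.getElem_map, List.getElem_finRange]
      rfl
    rw [hL, List.mem_cons] at hcL
    rcases hcL with hcL | hcL
    · exact absurd hcL h
    · exact hcL

lemma catRule_condorcet (hn : 0 < n) {T : Tournament n} (hT : IsTournament T)
    {c : Fin n} (hc : CondorcetWinner T c) : catRule n hn T c = 1 := by
  rw [catRule]
  have : (Finset.univ.filter fun π : Equiv.Perm (Fin n) => catWinner hn T π = c) =
      Finset.univ := by
    apply Finset.filter_true_of_mem
    intro π _
    exact condorcet_catWinner hn hT hc π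
  rw [this, Finset.card_univ, Fintype.card_perm, Fintype.card_fin]
  field_simp

lemma winner_cases (h3 : 3 ≤ n) (hn : 0 < n) {z m : Fin n} (hz : z.val = 0)
    (hm : m.val = n-1) (π : Equiv.Perm (Fin n)) :
    (catWinner hn (skT n) π = m → π ⟨n-1, by omega⟩ = m) ∧
    (catWinner hn (skT n) π = z →
      (π.symm m).val < (π.symm z).val ∧
        ¬(π ⟨0, hn⟩ = m ∧ π ⟨1, by omega⟩ = z)) := by
  have hzm : z ≠ m := fun h => by rw [h] at hz; omega
  set L := (List.finRange n).map π with hLdef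
  have hlen : L.length = n := by simp [hLdef]
  have hnd : L.Nodup := (List.nodup_finRange n).map π.injective
  have hget : ∀ (i : ℕ) (h : i < n), L[i]'(by omega) = π ⟨i, h⟩ := by
    intro i h
    simp [hLdef, List.getElem_map, List.getElem_finRange]
  have hmem : ∀ x : Fin n, x ∈ L := by
    intro x
    exact List.mem_map.mpr ⟨π.symm x, List.mem_finRange _, π.apply_symm_apply x⟩
  -- head decomposition
  have hL0 : L = π ⟨0, hn⟩ :: L.drop 1 := by
    have hlen0 : 0 < L.length := by omega
    have h1 := List.drop_eq_getElem_cons hlen0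
    simp only [List.drop_zero] at h1
    rw [← hget 0 hn]
    simpa using h1
  -- catWinner as foldl of st
  have hcw : catWinner hn (skT n) π = List.foldl (st n) (π ⟨0, hn⟩) (L.drop 1) := rfl
  -- decompose around m
  obtain ⟨A, B, hAB⟩ := List.append_of_mem (hmem m)
  have hndAB : (A ++ m :: B).Nodup := hAB ▸ hnd
  have hdisj : A.Disjoint (m :: B) := List.disjoint_of_nodup_append hndAB
  have hmA : m ∉ A := fun h => hdisj h (List.mem_cons_self)
  have hndB : (m :: B).Nodup := hndAB.of_append_right
  have hmB : m ∉ B := (List.nodup_cons.mp hndB).1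
  have hlen2 : A.length + (B.length + 1) = n := by
    have := hlen
    rw [hAB, List.length_append, List.length_cons] at this
    omega
  have hAlt : A.length < n := by omega
  -- value-at-position facts
  have hgetAlen : π ⟨A.length, hAlt⟩ = m := by
    rw [← hget A.length hAlt, List.getElem_of_eq hAB]
    rw [List.getElem_append_right (le_refl A.length)]
    simp
  have hposm : π.symm m = ⟨A.length, hAlt⟩ :=
    (Equiv.symm_apply_eq π).mpr hgetAlen.symm
  -- val-facts for membership
  have hvalA : ∀ x ∈ A, x.val ≠ n - 1 := by
    intro x hx hc
    exact hmA ((Fin.ext (hc.trans hm.symm) : x = m) ▸ hx)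
  have hvalB : ∀ x ∈ B, x.val ≠ n - 1 := by
    intro x hx hc
    exact hmB ((Fin.ext (hc.trans hm.symm) : x = m) ▸ hx)
  have hzA_or_B : z ∈ A ∨ z ∈ B := by
    have := hmem z
    rw [hAB, List.mem_append, List.mem_cons] at this
    rcases this with h | h
    · exact Or.inl h
    rcases h with h | h
    · exact absurd h hzm
    · exact Or.inr h
  rcases hzA_or_B with hzA | hzB
  · -- z before m : winner is m if B = [], else neither
    have hzB' : z ∉ B := fun h => hdisj hzA (List.mem_cons_of_mem _ h)
    obtain ⟨a, A', hA⟩ := List.exists_cons_of_ne_nil (List.ne_nil_of_mem hzA)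
    have hheadtail : π ⟨0, hn⟩ = a ∧ L.drop 1 = A' ++ m :: B := by
      have : π ⟨0, hn⟩ :: L.drop 1 = a :: (A' ++ m :: B) := by
        rw [← hL0, hAB, hA]; rfl
      exact ⟨(List.cons.injEq _ _ _ _ ▸ this).1, (List.cons.injEq _ _ _ _ ▸ this).2⟩
    have ha_mem : a ∈ A := hA ▸ List.mem_cons_self
    have hA'sub : ∀ x ∈ A', x ∈ A := fun x hx => hA ▸ List.mem_cons_of_mem _ hx
    have hw1 : List.foldl (st n) a A' = z := by
      apply F3 h3 hz A' a (hvalA a ha_mem)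
      · have := hzA
        rw [hA, List.mem_cons] at this
        rcases this with h | h
        · exact Or.inl h
        · exact Or.inr h
      · exact fun x hx => hvalA x (hA'sub x hx)
    have hstep : st n z m = m := st_false (skT_z_m h3 hz hm)
    have hfold : catWinner hn (skT n) π = List.foldl (st n) m B := by
      rw [hcw, hheadtail.1, hheadtail.2, List.foldl_append, hw1, List.foldl_cons, hstep]
    rcases B with _ | ⟨x, B'⟩
    · -- m is last, winner = m
      have hwin : catWinner hn (skT n) π = m := hfold
      constructor
      · intro _
        have hAlen : A.length = n - 1 := by simp at hlen2; omega
        rw [Equiv.apply_eq_iff_eq_symm_apply, hposm]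
        exact Fin.ext (by simp [hAlen])
      · intro hcon
        rw [hwin] at hcon
        exact absurd (congrArg Fin.val hcon) (by omega)
    · -- winner is neither z nor m
      have hxB : x ∈ x :: B' := List.mem_cons_self
      have hx0 : x.val ≠ 0 := fun h => hzB' ((Fin.ext (h.trans hz.symm) : x = z) ▸ hxB)
      have hxm : x.val ≠ n - 1 := hvalB x hxB
      have hstep2 : st n m x = x := st_false (skT_m_x h3 hm hx0)
      have hres := F2 h3 B' x hx0 hxm (by
        intro y hy
        have hyB : y ∈ x :: B' := List.mem_cons_of_mem _ hy
        exact ⟨fun h => hzB' ((Fin.ext (h.trans hz.symm) : y = z) ▸ hyB), hvalB y hyB⟩)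
      have hwin : (catWinner hn (skT n) π).val ≠ 0 ∧ (catWinner hn (skT n) π).val ≠ n - 1 := by
        rw [hfold, List.foldl_cons, hstep2]; exact hres
      constructor
      · intro hcon
        exact absurd (congrArg Fin.val hcon ▸ hm ▸ rfl : (catWinner hn (skT n) π).val = n-1) hwin.2
      · intro hcon
        exact absurd (congrArg Fin.val hcon ▸ hz ▸ rfl : (catWinner hn (skT n) π).val = 0) hwin.1
  · -- z after m : winner is z unless (A = [] and z immediately after m)
    have hzA' : z ∉ A := fun h => hdisj h (List.mem_cons_of_mem _ hzB)
    have hndB' : B.Nodup := (List.nodup_cons.mp hndB).2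
    obtain ⟨j₀, hj₀lt, hj₀⟩ := List.mem_iff_getElem.mp hzB
    have hidx : A.length + 1 + j₀ < n := by omega
    have hgetz : π ⟨A.length + 1 + j₀, hidx⟩ = z := by
      rw [← hget _ hidx, List.getElem_of_eq hAB]
      rw [List.getElem_append_right (by omega)]
      have he : A.length + 1 + j₀ - A.length = j₀ + 1 := by omega
      simp only [he, List.getElem_cons_succ]
      exact hj₀
    have hposz : π.symm z = ⟨A.length + 1 + j₀, hidx⟩ :=
      (Equiv.symm_apply_eq π).mpr hgetz.symm
    have hltpos : (π.symm m).val < (π.symm z).val := by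
      rw [hposm, hposz]; simp; omega
    rcases A with _ | ⟨a, A'⟩
    · -- m is first
      have hheadtail : π ⟨0, hn⟩ = m ∧ L.drop 1 = B := by
        have : π ⟨0, hn⟩ :: L.drop 1 = m :: B := by rw [← hL0, hAB]; rfl
        exact ⟨(List.cons.injEq _ _ _ _ ▸ this).1, (List.cons.injEq _ _ _ _ ▸ this).2⟩
      obtain ⟨x, B', hB⟩ := List.exists_cons_of_ne_nil (List.ne_nil_of_mem hzB)
      by_cases hx0 : x.val = 0
      · -- z is second: winner is neither
        have hxz : x = z := Fin.ext (by omega)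
        have hB'len : B'.length = n - 2 := by
          have := hlen2; rw [hB] at this; simp at this; omega
        obtain ⟨y, B'', hB'⟩ := List.exists_cons_of_ne_nil
          (show B' ≠ [] from fun h => by rw [h] at hB'len; simp at hB'len; omega)
        have hxB' : x ∉ B' := by
          have := hndB'
          rw [hB] at this
          exact (List.nodup_cons.mp this).1
        have hyB' : y ∈ B' := hB' ▸ List.mem_cons_self
        have hy0 : y.val ≠ 0 := by
          intro h
          exact hxB' ((Fin.ext (by omega) : y = x) ▸ hyB')
        have hym : y.val ≠ n - 1 := hvalB y (hB ▸ List.mem_cons_of_mem _ hyB')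
        have hstep1 : st n m x = m := st_true (by rw [hxz]; exact skT_m_z h3 hz hm)
        have hstep2 : st n m y = y := st_false (skT_m_x h3 hm hy0)
        have hyB'' : y ∉ B'' := by
          have h2 : B'.Nodup := by
            have := hndB'; rw [hB] at this
            exact (List.nodup_cons.mp this).2
          rw [hB'] at h2
          exact (List.nodup_cons.mp h2).1
        have hres := F2 h3 B'' y hy0 hym (by
          intro u hu
          have huB : u ∈ B := by
            rw [hB, hB']
            exact List.mem_cons_of_mem _ (List.mem_cons_of_mem _ hu)
          constructor
          · intro h
            have huz : u = z := Fin.ext (by omega)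
            have : x ∈ B' := by
              rw [hxz, ← huz] at *
              exact hB' ▸ List.mem_cons_of_mem _ hu
            exact hxB' this
          · exact hvalB u huB)
        have hwin : (catWinner hn (skT n) π).val ≠ 0 ∧ (catWinner hn (skT n) π).val ≠ n - 1 := by
          rw [hcw, hheadtail.1, hheadtail.2, hB, hB', List.foldl_cons, hstep1,
            List.foldl_cons, hstep2]
          exact hres
        constructor
        · intro hcon
          exact absurd (congrArg Fin.val hcon ▸ hm ▸ rfl : (catWinner hn (skT n) π).val = n-1) hwin.2
        · intro hcon
          exact absurd (congrArg Fin.val hcon ▸ hz ▸ rfl : (catWinner hn (skT n) π).val = 0) hwin.1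
      · -- winner = z
        have hxm : x.val ≠ n - 1 := hvalB x (hB ▸ List.mem_cons_self)
        have hstep1 : st n m x = x := st_false (skT_m_x h3 hm hx0)
        have hzB'' : z ∈ B' := by
          have := hzB
          rw [hB, List.mem_cons] at this
          rcases this with h | h
          · exact absurd (congrArg Fin.val h.symm) (by omega)
          · exact h
        have hwin : catWinner hn (skT n) π = z := by
          rw [hcw, hheadtail.1, hheadtail.2, hB, List.foldl_cons, hstep1]
          exact F3 h3 hz B' x hxm (Or.inr hzB'')
            (fun u hu => hvalB u (hB ▸ List.mem_cons_of_mem _ hu))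
        constructor
        · intro hcon
          rw [hwin] at hcon
          exact absurd (congrArg Fin.val hcon) (by omega)
        · intro _
          refine ⟨hltpos, ?_⟩
          rintro ⟨-, h2⟩
          -- π ⟨1⟩ = x ≠ z
          have h1n : 1 < n := by omega
          have hπ1 : π ⟨1, h1n⟩ = x := by
            rw [← hget 1 h1n, List.getElem_of_eq hAB]
            simp [hB]
          rw [hπ1] at h2
          exact hx0 (by rw [h2]; exact hz)
    · -- m in middle or so, z after: winner = z
      have hheadtail : π ⟨0, hn⟩ = a ∧ L.drop 1 = A' ++ m :: B := by
        have : π ⟨0, hn⟩ :: L.drop 1 = a :: (A' ++ m :: B) := by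
          rw [← hL0, hAB]; rfl
        exact ⟨(List.cons.injEq _ _ _ _ ▸ this).1, (List.cons.injEq _ _ _ _ ▸ this).2⟩
      have ha_mem : a ∈ a :: A' := List.mem_cons_self
      have hA'sub : ∀ x ∈ A', x ∈ a :: A' := fun x hx => List.mem_cons_of_mem _ hx
      have ha0 : a.val ≠ 0 := fun h => hzA' ((Fin.ext (h.trans hz.symm) : a = z) ▸ ha_mem)
      have ham : a.val ≠ n - 1 := hvalA a ha_mem
      have hw1 := F2 h3 A' a ha0 ham (by
        intro x hx
        have hxA : x ∈ a :: A' := hA'sub x hx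
        exact ⟨fun h => hzA' ((Fin.ext (h.trans hz.symm) : x = z) ▸ hxA),
          hvalA x hxA⟩)
      set w₁ := List.foldl (st n) a A' with hw1def
      have hstep : st n w₁ m = w₁ := st_true (skT_x_m h3 hm hw1.1 hw1.2)
      have hwin : catWinner hn (skT n) π = z := by
        rw [hcw, hheadtail.1, hheadtail.2, List.foldl_append, ← hw1def,
          List.foldl_cons, hstep]
        exact F3 h3 hz B w₁ hw1.2 (Or.inr hzB) hvalB
      constructor
      · intro hcon
        rw [hwin] at hcon
        exact absurd (congrArg Fin.val hcon) (by omega)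
      · intro _
        refine ⟨hltpos, ?_⟩
        rintro ⟨h1, -⟩
        rw [hheadtail.1] at h1
        exact ham (by rw [h1]; exact hm)

open Finset

lemma card_fiber_eq (a b b' : Fin n) :
    (univ.filter fun π : Equiv.Perm (Fin n) => π a = b).card =
    (univ.filter fun π : Equiv.Perm (Fin n) => π a = b').card := by
  apply Finset.card_bij' (fun σ _ => Equiv.swap b b' * σ) (fun σ _ => Equiv.swap b b' * σ)
  · intro σ hσ
    simp only [mem_filter, mem_univ, true_and] at hσ ⊢
    simp [Equiv.Perm.mul_apply, hσ]
  · intro σ hσ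
    simp only [mem_filter, mem_univ, true_and] at hσ ⊢
    simp [Equiv.Perm.mul_apply, hσ]
  · intro σ _
    simp [← mul_assoc]
  · intro σ _
    simp [← mul_assoc]

lemma card_fix (hn : 0 < n) (a b : Fin n) :
    (univ.filter fun π : Equiv.Perm (Fin n) => π a = b).card * n = n.factorial := by
  have h1 : (univ : Finset (Equiv.Perm (Fin n))).card = n.factorial := by
    rw [card_univ, Fintype.card_perm, Fintype.card_fin]
  have h2 : (univ : Finset (Equiv.Perm (Fin n))).card =
      ∑ c : Fin n, (univ.filter fun π : Equiv.Perm (Fin n) => π a = c).card :=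
    Finset.card_eq_sum_card_fiberwise (fun σ _ => mem_univ _)
  rw [Finset.sum_congr rfl (fun c _ => card_fiber_eq a c b)] at h2
  rw [Finset.sum_const, smul_eq_mul] at h2
  have h4 : (univ : Finset (Fin n)).card = n := by simp
  rw [h4] at h2
  rw [mul_comm, ← h2]
  exact h1

lemma exists_g (a b a' b' : Fin n) (hab : a ≠ b) (hab' : a' ≠ b') :
    ∃ g : Equiv.Perm (Fin n), g a = a' ∧ g b = b' := by
  set b₁ := Equiv.swap a a' b with hb₁
  have hba' : b₁ ≠ a' := by
    intro h
    rw [hb₁] at h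
    have : b = a := by
      have := congrArg (Equiv.swap a a') h
      rwa [Equiv.swap_apply_self, Equiv.swap_apply_right] at this
    exact hab this.symm
  refine ⟨Equiv.swap b₁ b' * Equiv.swap a a', ?_, ?_⟩
  · rw [Equiv.Perm.mul_apply, Equiv.swap_apply_left]
    rw [Equiv.swap_apply_of_ne_of_ne (Ne.symm hba') hab']
  · rw [Equiv.Perm.mul_apply, ← hb₁, Equiv.swap_apply_left]

lemma card_fiber2_eq (i0 i1 : Fin n) (a b a' b' : Fin n) (hab : a ≠ b) (hab' : a' ≠ b') :
    (univ.filter fun π : Equiv.Perm (Fin n) => π i0 = a ∧ π i1 = b).card =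
    (univ.filter fun π : Equiv.Perm (Fin n) => π i0 = a' ∧ π i1 = b').card := by
  obtain ⟨g, hg1, hg2⟩ := exists_g a b a' b' hab hab'
  apply Finset.card_bij' (fun σ _ => g * σ) (fun σ _ => g⁻¹ * σ)
  · intro σ hσ
    simp only [mem_filter, mem_univ, true_and] at hσ ⊢
    rw [Equiv.Perm.mul_apply, Equiv.Perm.mul_apply, hσ.1, hσ.2]
    exact ⟨hg1, hg2⟩
  · intro σ hσ
    simp only [mem_filter, mem_univ, true_and] at hσ ⊢
    rw [Equiv.Perm.mul_apply, Equiv.Perm.mul_apply, hσ.1, hσ.2]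
    constructor
    · rw [← hg1]; simp
    · rw [← hg2]; simp
  · intro σ _; simp [← mul_assoc]
  · intro σ _; simp [← mul_assoc]

lemma card_fix2 (i0 i1 : Fin n) (hi : i0 ≠ i1) (a b : Fin n) (hab : a ≠ b) :
    (univ.filter fun π : Equiv.Perm (Fin n) => π i0 = a ∧ π i1 = b).card * (n * n - n) =
      n.factorial := by
  have h1 : (univ : Finset (Equiv.Perm (Fin n))).card = n.factorial := by
    rw [card_univ, Fintype.card_perm, Fintype.card_fin]
  have h2 : (univ : Finset (Equiv.Perm (Fin n))).card =
      ∑ p ∈ (univ : Finset (Fin n)).offDiag,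
        (univ.filter fun π : Equiv.Perm (Fin n) => (π i0, π i1) = p).card :=
    Finset.card_eq_sum_card_fiberwise (fun σ _ => by
      rw [Finset.mem_coe, Finset.mem_offDiag]
      exact ⟨mem_univ _, mem_univ _, fun h => hi (σ.injective h)⟩)
  have h3 : ∀ p ∈ (univ : Finset (Fin n)).offDiag,
      (univ.filter fun π : Equiv.Perm (Fin n) => (π i0, π i1) = p).card =
      (univ.filter fun π : Equiv.Perm (Fin n) => π i0 = a ∧ π i1 = b).card := by
    intro p hp
    rw [Finset.mem_offDiag] at hp
    have : (univ.filter fun π : Equiv.Perm (Fin n) => (π i0, π i1) = p) =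
        (univ.filter fun π : Equiv.Perm (Fin n) => π i0 = p.1 ∧ π i1 = p.2) := by
      apply Finset.filter_congr
      intro π _
      rw [Prod.ext_iff]
    rw [this]
    exact card_fiber2_eq i0 i1 p.1 p.2 a b hp.2.2 hab
  rw [Finset.sum_congr rfl h3, Finset.sum_const, smul_eq_mul, Finset.offDiag_card] at h2
  have h4 : (univ : Finset (Fin n)).card = n := by simp
  rw [h4] at h2
  rw [mul_comm, ← h2]
  exact h1

lemma card_half (z m : Fin n) (hzm : z ≠ m) :
    (univ.filter fun π : Equiv.Perm (Fin n) =>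
      (π.symm m).val < (π.symm z).val).card * 2 = n.factorial := by
  have h1 : (univ : Finset (Equiv.Perm (Fin n))).card = n.factorial := by
    rw [card_univ, Fintype.card_perm, Fintype.card_fin]
  have hbij : (univ.filter fun π : Equiv.Perm (Fin n) =>
      (π.symm m).val < (π.symm z).val).card =
      (univ.filter fun π : Equiv.Perm (Fin n) =>
      ¬((π.symm m).val < (π.symm z).val)).card := by
    apply Finset.card_bij' (fun σ _ => Equiv.swap m z * σ) (fun σ _ => Equiv.swap m z * σ)
    · intro σ hσ
      simp only [mem_filter, mem_univ, true_and] at hσ ⊢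
      have e1 : ((Equiv.swap m z * σ).symm) m = σ.symm z := by
        rw [Equiv.symm_apply_eq]
        simp [Equiv.Perm.mul_apply]
      have e2 : ((Equiv.swap m z * σ).symm) z = σ.symm m := by
        rw [Equiv.symm_apply_eq]
        simp [Equiv.Perm.mul_apply]
      rw [e1, e2]
      omega
    · intro σ hσ
      simp only [mem_filter, mem_univ, true_and] at hσ ⊢
      have e1 : ((Equiv.swap m z * σ).symm) m = σ.symm z := by
        rw [Equiv.symm_apply_eq]
        simp [Equiv.Perm.mul_apply]
      have e2 : ((Equiv.swap m z * σ).symm) z = σ.symm m := by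
        rw [Equiv.symm_apply_eq]
        simp [Equiv.Perm.mul_apply]
      rw [e1, e2]
      have hne : (σ.symm m).val ≠ (σ.symm z).val := fun h =>
        hzm (σ.symm.injective (Fin.ext h)).symm
      omega
    · intro σ _; simp [← mul_assoc]
    · intro σ _; simp [← mul_assoc]
  have := Finset.card_filter_add_card_filter_not
    (s := (univ : Finset (Equiv.Perm (Fin n))))
    (p := fun π => (π.symm m).val < (π.symm z).val)
  omega


end S11

/-- The randomized voting caterpillar rule on n players is not 2-SNM-α for any
α < 1/2 - (n-2)/(n(n-1)). -/
theorem stmt_11 (n : ℕ) (hn : 3 ≤ n) (α : ℝ)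
    (hsnm : SNM2 (catRule n (by omega)) α) :
    1/2 - ((n:ℝ) - 2)/((n:ℝ) * ((n:ℝ) - 1)) ≤ α := by
  classical
  have h3 : 3 ≤ n := hn
  have hn0 : 0 < n := by omega
  have h1n : 1 < n := by omega
  have hn1 : n - 1 < n := by omega
  set z : Fin n := ⟨0, hn0⟩ with hzdef
  set m : Fin n := ⟨n-1, hn1⟩ with hmdef
  have hz : z.val = 0 := rfl
  have hm : m.val = n - 1 := rfl
  have hzm : z ≠ m := fun h => by
    have := congrArg Fin.val h
    simp [hzdef, hmdef] at this
    omega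
  set T : Tournament n := skT n with hTdef
  set T' : Tournament n := flipTo z m (skT n) with hT'def
  have hT : IsTournament T := S11.skT_tournament h3
  have hT' : IsTournament T' := S11.flip_tournament h3 hz hm
  have hadj : PairAdjacent z m T T' := by
    intro a b hab
    rw [hT'def, flipTo]
    rw [if_neg (fun h => hab (Or.inl h)), if_neg (fun h => hab (Or.inr h))]
  have key : catRule n hn0 T' z + catRule n hn0 T' m
      - catRule n hn0 T z - catRule n hn0 T m ≤ α :=
    hsnm T T' hT hT' z m hzm hadj
  have r1 : catRule n hn0 T' z = 1 :=
    S11.catRule_condorcet hn0 hT' (S11.flip_condorcet h3 hz hm)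
  have r2 : 0 ≤ catRule n hn0 T' m := by
    rw [catRule]
    positivity
  set Sz := Finset.univ.filter (fun π : Equiv.Perm (Fin n) => catWinner hn0 T π = z)
    with hSz
  set Sm := Finset.univ.filter (fun π : Equiv.Perm (Fin n) => catWinner hn0 T π = m)
    with hSm
  set Aset := Finset.univ.filter (fun π : Equiv.Perm (Fin n) =>
    (π.symm m).val < (π.symm z).val) with hAset
  set Bset := Finset.univ.filter (fun π : Equiv.Perm (Fin n) =>
    π ⟨0, hn0⟩ = m ∧ π ⟨1, h1n⟩ = z) with hBset
  set Cset := Finset.univ.filter (fun π : Equiv.Perm (Fin n) => π ⟨n-1, hn1⟩ = m)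
    with hCset
  have hBA : Bset ⊆ Aset := by
    intro π hπ
    rw [hBset, Finset.mem_filter] at hπ
    rw [hAset, Finset.mem_filter]
    refine ⟨Finset.mem_univ _, ?_⟩
    have e1 : π.symm m = ⟨0, hn0⟩ := (Equiv.symm_apply_eq π).mpr hπ.2.1.symm
    have e2 : π.symm z = ⟨1, h1n⟩ := (Equiv.symm_apply_eq π).mpr hπ.2.2.symm
    rw [e1, e2]
    exact Nat.zero_lt_one
  have hSmC : Sm ⊆ Cset := by
    intro π hπ
    rw [hSm, Finset.mem_filter] at hπ
    rw [hCset, Finset.mem_filter]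
    exact ⟨Finset.mem_univ _, (S11.winner_cases h3 hn0 hz hm π).1 hπ.2⟩
  have hSzQ : Sz ⊆ Aset \ Bset := by
    intro π hπ
    rw [hSz, Finset.mem_filter] at hπ
    have hw := (S11.winner_cases h3 hn0 hz hm π).2 hπ.2
    rw [Finset.mem_sdiff, hAset, hBset, Finset.mem_filter, Finset.mem_filter]
    exact ⟨⟨Finset.mem_univ _, hw.1⟩, fun hc => hw.2 hc.2⟩
  have ha : Aset.card * 2 = n.factorial := S11.card_half z m hzm
  have hb : Bset.card * (n * n - n) = n.factorial :=
    S11.card_fix2 ⟨0, hn0⟩ ⟨1, h1n⟩ (fun h => by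
      have := congrArg Fin.val h; simp at this) m z (Ne.symm hzm)
  have hc : Cset.card * n = n.factorial := S11.card_fix hn0 _ m
  have hczb : Sz.card + Bset.card ≤ Aset.card := by
    have h1 := Finset.card_le_card hSzQ
    rw [Finset.card_sdiff_of_subset hBA] at h1
    have h2 := Finset.card_le_card hBA
    omega
  have hcm : Sm.card ≤ Cset.card := Finset.card_le_card hSmC
  set N : ℝ := (n : ℝ) with hN
  have hN3 : (3:ℝ) ≤ N := by rw [hN]; exact_mod_cast hn
  have hF : (0:ℝ) < (n.factorial : ℝ) := by exact_mod_cast n.factorial_pos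
  have hNne : N ≠ 0 := by intro h; rw [h] at hN3; linarith
  have hN1ne : N - 1 ≠ 0 := by intro h; nlinarith
  have hNNne : N * N - N ≠ 0 := by intro h; nlinarith
  have hcastnn : ((n*n - n : ℕ) : ℝ) = N * N - N := by
    have h : n ≤ n * n := Nat.le_mul_of_pos_left n hn0
    rw [Nat.cast_sub h]
    push_cast
    ring
  have qa : (Aset.card : ℝ) = (n.factorial : ℝ) / 2 := by
    have h' : ((Aset.card * 2 : ℕ) : ℝ) = ((n.factorial : ℕ) : ℝ) := by rw [ha]
    push_cast at h'
    linarith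
  have qb : (Bset.card : ℝ) = (n.factorial : ℝ) / (N * N - N) := by
    have h' : ((Bset.card * (n * n - n) : ℕ) : ℝ) = ((n.factorial : ℕ) : ℝ) := by rw [hb]
    rw [Nat.cast_mul, hcastnn] at h'
    rw [eq_div_iff hNNne]
    linarith
  have qc : (Cset.card : ℝ) = (n.factorial : ℝ) / N := by
    have h' : ((Cset.card * n : ℕ) : ℝ) = ((n.factorial : ℕ) : ℝ) := by rw [hc]
    push_cast at h'
    rw [eq_div_iff hNne]
    linarith
  have hR : (Sz.card : ℝ) + (Sm.card : ℝ) ≤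
      (n.factorial : ℝ) / 2 - (n.factorial : ℝ) / (N * N - N) + (n.factorial : ℝ) / N := by
    have h1 : (Sz.card : ℝ) + (Bset.card : ℝ) ≤ (Aset.card : ℝ) := by exact_mod_cast hczb
    have h2 : (Sm.card : ℝ) ≤ (Cset.card : ℝ) := by exact_mod_cast hcm
    rw [qa] at h1
    rw [qb] at h1
    rw [qc] at h2
    linarith
  have hrz : catRule n hn0 T z = (Sz.card : ℝ) / (n.factorial : ℝ) := rfl
  have hrm : catRule n hn0 T m = (Sm.card : ℝ) / (n.factorial : ℝ) := rfl
  have hsum : catRule n hn0 T z + catRule n hn0 T m ≤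
      ((n.factorial : ℝ) / 2 - (n.factorial : ℝ) / (N * N - N) + (n.factorial : ℝ) / N)
        / (n.factorial : ℝ) := by
    rw [hrz, hrm, ← add_div]
    gcongr
  have hdiv : ((n.factorial : ℝ) / 2 - (n.factorial : ℝ) / (N * N - N)
      + (n.factorial : ℝ) / N) / (n.factorial : ℝ)
      = 1/2 - 1/(N * N - N) + 1/N := by
    field_simp
  have hfinal : 1/2 - (N - 2)/(N * (N - 1)) = 1 - (1/2 - 1/(N * N - N) + 1/N) := by
    field_simp
    ring
  rw [hdiv] at hsum
  rw [hfinal]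
  linarith
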